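/- Let G be a finite group acting on a set Ω, and let p be a prime dividing |G|. Suppose that every nontrivial p-subgroup of G has exactly one fixed point in Ω. Then any two points of Ω whose stabilizers in G have order divisible by p lie in the same G-orbit; in particular, the set of points of Ω with stabilizer of order divisible by p is nonempty and forms a single G-orbit. (Abstract version of the fact that the automorphism group of a zero p-rank curve has exactly one non-tame orbit.) -/
import Mathlib

theorem stmt12_aux (G : Type*) [Group G] [Finite G] (Ω : Type*) [MulAction G Ω]
    (p : ℕ) (hp : p.Prime) (hpG : p ∣ Nat.card G)
    (hfix : ∀ P : Subgroup G, IsPGroup p P → P ≠ ⊥ → ∃! ω : Ω, ∀ g ∈ P, g • ω = ω)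
    (P : Sylow p G) (ω₀ : Ω) (hω₀ : ∀ g ∈ (P : Subgroup G), g • ω₀ = ω₀)
    (hu : ∀ y : Ω, (∀ g ∈ (P : Subgroup G), g • y = y) → y = ω₀)
    (ω : Ω) (hω : p ∣ Nat.card (MulAction.stabilizer G ω)) :
    ω ∈ MulAction.orbit G ω₀ := by
  haveI : Fact p.Prime := ⟨hp⟩
  -- Cauchy in the stabilizer
  obtain ⟨x, hx⟩ := exists_prime_orderOf_dvd_card' (G := MulAction.stabilizer G ω) p hω
  -- Q := zpowers of x in G, a nontrivial p-subgroup fixing ω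
  set Q : Subgroup G := Subgroup.zpowers (x : G) with hQ
  have hxG : orderOf (x : G) = p := by
    rw [← hx]; exact (orderOf_injective _ (Subgroup.subtype_injective _) x).symm ▸ rfl
  have hQp : IsPGroup p Q := by
    apply IsPGroup.of_card
    rw [Nat.card_zpowers, hxG, pow_one]
  have hQne : Q ≠ ⊥ := by
    intro h
    have : (x : G) = 1 := by
      have := Subgroup.mem_zpowers (x : G)
      rw [← hQ, h, Subgroup.mem_bot] at this
      exact this
    rw [this, orderOf_one] at hxG
    exact hp.one_lt.ne' hxG.symm
  have hQfix : ∀ g ∈ Q, g • ω = ω := fun g hg =>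
    (Subgroup.zpowers_le.mpr x.2 hg : g ∈ MulAction.stabilizer G ω)
  -- Q lies in some Sylow R; ω is the unique fixed point of R
  obtain ⟨R, hQR⟩ := hQp.exists_le_sylow
  obtain ⟨ωR, hωR, huR⟩ := hfix R R.2 (R.ne_bot_of_dvd_card hpG)
  obtain ⟨ωQ, hωQ, huQ⟩ := hfix Q hQp hQne
  have hωeq : ω = ωR := by
    rw [huQ ω hQfix, huQ ωR fun g hg => hωR g (hQR hg)]
  -- R and P are conjugate: g • R = P
  obtain ⟨g, hg⟩ := MulAction.exists_smul_eq G R P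
  -- then g • ω is fixed by P
  have hfixP : ∀ h ∈ (P : Subgroup G), h • (g • ω) = g • ω := by
    intro h hh
    rw [← hg] at hh
    rw [Sylow.coe_subgroup_smul, Subgroup.mem_pointwise_smul_iff_inv_smul_mem] at hh
    have : (g⁻¹ * h * g) • ω = ω := by
      rw [hωeq]; exact hωR _ hh
    calc h • g • ω = g • (g⁻¹ * h * g) • ω := by
          rw [← mul_smul, ← mul_smul]; group
      _ = g • ω := by rw [this]
  have : g • ω = ω₀ := hu _ hfixP
  exact ⟨g⁻¹, by rw [← this]; simp⟩

/-- Abstract version of the fact that the automorphism group of a curve of zero `p`-rank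
has exactly one non-tame orbit: if `G` is a finite group acting on a set `Ω`, `p` is a
prime dividing `|G|`, and every nontrivial `p`-subgroup of `G` has exactly one fixed
point in `Ω`, then the set of points of `Ω` whose stabilizer has order divisible by `p`
is nonempty, and any two such points lie in the same `G`-orbit. -/
theorem stmt12 (G : Type*) [Group G] [Finite G] (Ω : Type*) [MulAction G Ω]
    (p : ℕ) (hp : p.Prime) (hpG : p ∣ Nat.card G)
    (hfix : ∀ P : Subgroup G, IsPGroup p P → P ≠ ⊥ → ∃! ω : Ω, ∀ g ∈ P, g • ω = ω) :
    (∃ ω : Ω, p ∣ Nat.card (MulAction.stabilizer G ω)) ∧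
    ∀ ω₁ ω₂ : Ω, p ∣ Nat.card (MulAction.stabilizer G ω₁) →
      p ∣ Nat.card (MulAction.stabilizer G ω₂) → ω₁ ∈ MulAction.orbit G ω₂ := by
  haveI : Fact p.Prime := ⟨hp⟩
  obtain ⟨P⟩ : Nonempty (Sylow p G) := inferInstance
  obtain ⟨ω₀, hω₀, hu⟩ := hfix P P.2 (P.ne_bot_of_dvd_card hpG)
  have hPle : (P : Subgroup G) ≤ MulAction.stabilizer G ω₀ := fun g hg => hω₀ g hg
  have hdvd₀ : p ∣ Nat.card (MulAction.stabilizer G ω₀) :=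
    (P.dvd_card_of_dvd_card hpG).trans (Subgroup.card_dvd_of_le hPle)
  refine ⟨⟨ω₀, hdvd₀⟩, fun ω₁ ω₂ h₁ h₂ => ?_⟩
  have m₁ := stmt12_aux G Ω p hp hpG hfix P ω₀ hω₀ hu ω₁ h₁
  have m₂ := stmt12_aux G Ω p hp hpG hfix P ω₀ hω₀ hu ω₂ h₂
  obtain ⟨a, ha⟩ := m₁
  obtain ⟨b, hb⟩ := m₂
  exact ⟨a * b⁻¹, by simp only [← hb, ← ha, mul_smul, inv_smul_smul]⟩
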